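/- Let H and L be real Hilbert spaces, Φ : H → L a bounded linear operator with adjoint Φ*, A ⊆ H a nonempty symmetric set (x ∈ A implies −x ∈ A), y ∈ L, μ > 0 and α > 0. Assume for all x₁, x₂ ∈ A: α‖x₁ + x₂‖² ≤ ‖Φ(x₁ + x₂)‖² ≤ (1/μ)‖x₁ + x₂‖². Let xⁿ ∈ A and let xⁿ⁺¹ ∈ A be a best approximation in A to xⁿ + μΦ*(y − Φxⁿ). Then for every x_A ∈ A: ‖y − Φxⁿ⁺¹‖² ≤ ‖y − Φx_A‖² + (1/μ − α)‖x_A − xⁿ‖². -/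

import Mathlib

/-- residual bound after one Iterative Projection Algorithm step. -/
theorem stmt_5
    {H L : Type*} [NormedAddCommGroup H] [InnerProductSpace ℝ H] [CompleteSpace H]
    [NormedAddCommGroup L] [InnerProductSpace ℝ L] [CompleteSpace L]
    (Φ : H →L[ℝ] L) (A : Set H) (hA : A.Nonempty)
    (hsym : ∀ x ∈ A, -x ∈ A)
    (y : L) (μ α : ℝ) (hμ : 0 < μ) (hα : 0 < α)
    (hbi : ∀ x₁ ∈ A, ∀ x₂ ∈ A,
      α * ‖x₁ + x₂‖ ^ 2 ≤ ‖Φ (x₁ + x₂)‖ ^ 2 ∧ ‖Φ (x₁ + x₂)‖ ^ 2 ≤ (1 / μ) * ‖x₁ + x₂‖ ^ 2)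
    (xn : H) (hxn : xn ∈ A)
    (xn1 : H) (hxn1 : xn1 ∈ A)
    (hproj : ∀ z ∈ A,
      ‖xn1 - (xn + μ • (ContinuousLinearMap.adjoint Φ) (y - Φ xn))‖ ≤
      ‖z - (xn + μ • (ContinuousLinearMap.adjoint Φ) (y - Φ xn))‖) :
    ∀ xA ∈ A, ‖y - Φ xn1‖ ^ 2 ≤ ‖y - Φ xA‖ ^ 2 + (1 / μ - α) * ‖xA - xn‖ ^ 2 := by
  intro xA hxA
  set r : L := y - Φ xn with hr
  set g : H := μ • (ContinuousLinearMap.adjoint Φ) r with hg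
  set u : H := xn1 - xn with hu
  set v : H := xA - xn with hv
  -- projection inequality, squared
  have h1 : ‖u - g‖ ^ 2 ≤ ‖v - g‖ ^ 2 := by
    have h := hproj xA hxA
    have h' : ‖u - g‖ ≤ ‖v - g‖ := by
      have e1 : xn1 - (xn + g) = u - g := by rw [hu]; abel
      have e2 : xA - (xn + g) = v - g := by rw [hv]; abel
      rwa [e1, e2] at h
    exact pow_le_pow_left₀ (norm_nonneg _) h' 2
  -- bi-Lipschitz bounds
  have hU := (hbi xn1 hxn1 (-xn) (hsym xn hxn)).2
  have hLb := (hbi xA hxA (-xn) (hsym xn hxn)).1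
  rw [show xn1 + -xn = u by rw [hu]; abel] at hU
  rw [show xA + -xn = v by rw [hv]; abel] at hLb
  -- inner product identities
  have hiu : (inner ℝ u g : ℝ) = μ * inner ℝ r (Φ u) := by
    rw [hg, real_inner_smul_right, real_inner_comm,
      ContinuousLinearMap.adjoint_inner_left]
  have hiv : (inner ℝ v g : ℝ) = μ * inner ℝ r (Φ v) := by
    rw [hg, real_inner_smul_right, real_inner_comm,
      ContinuousLinearMap.adjoint_inner_left]
  -- expand the projection inequality
  have h2 : ‖u‖ ^ 2 - 2 * (μ * inner ℝ r (Φ u)) ≤ ‖v‖ ^ 2 - 2 * (μ * inner ℝ r (Φ v)) := by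
    have e1 := norm_sub_sq_real u g
    have e2 := norm_sub_sq_real v g
    rw [e1, e2, hiu, hiv] at h1
    linarith
  -- rewrite goal residuals
  have g1 : y - Φ xn1 = r - Φ u := by
    rw [hr, hu, map_sub]; abel
  have g2 : y - Φ xA = r - Φ v := by
    rw [hr, hv, map_sub]; abel
  rw [g1, g2]
  have eu := norm_sub_sq_real r (Φ u)
  have ev := norm_sub_sq_real r (Φ v)
  have h3 : (1 / μ) * (‖u‖ ^ 2 - 2 * (μ * inner ℝ r (Φ u)))
      ≤ (1 / μ) * (‖v‖ ^ 2 - 2 * (μ * inner ℝ r (Φ v))) :=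
    mul_le_mul_of_nonneg_left h2 (by positivity)
  have hμ' : μ ≠ 0 := ne_of_gt hμ
  have h4 : (1 / μ) * (2 * (μ * inner ℝ r (Φ u))) = 2 * (inner ℝ r (Φ u) : ℝ) := by
    field_simp
  have h5 : (1 / μ) * (2 * (μ * inner ℝ r (Φ v))) = 2 * (inner ℝ r (Φ v) : ℝ) := by
    field_simp
  nlinarith [h3, hU, hLb, eu, ev]
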